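/- arXiv:2412.16318 — 2 statements merged into one kernel-verified Lean document; each statement's English description precedes it below -/
import Mathlib

section
/- Let $\{x_t\}_{t=1}^T$ be a sequence with $x_t \in [0,B]$ for all $t \in [T]$. Then $\sum_{t=1}^T \frac{x_t}{\sqrt{1+\sum_{s=1}^{t-1} x_s}} \leq 4\sqrt{1+\frac{1}{2}\sum_{t=1}^T x_t}+B$. -/
lemma key_step (B S x : ℝ) (hB : 0 < B) (hS : 0 ≤ S) (hx0 : 0 ≤ x) (hxB : x ≤ B) :
    x / Real.sqrt (1 + S) ≤
      2 * Real.sqrt 2 * (Real.sqrt (1 + S + x) - Real.sqrt (1 + S))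
        + (min (S + x) B - min S B) := by
  set u := Real.sqrt (1 + S) with hu
  set v := Real.sqrt (1 + S + x) with hv
  have hu2 : u ^ 2 = 1 + S := Real.sq_sqrt (by linarith)
  have hv2 : v ^ 2 = 1 + S + x := Real.sq_sqrt (by linarith)
  have hunn : 0 ≤ u := Real.sqrt_nonneg _
  have hu1 : 1 ≤ u := by nlinarith
  have huv : u ≤ v := Real.sqrt_le_sqrt (by linarith)
  have hupos : 0 < u := lt_of_lt_of_le one_pos hu1
  have h2 : Real.sqrt 2 ^ 2 = 2 := Real.sq_sqrt (by norm_num)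
  have h2a : 1 ≤ Real.sqrt 2 := by nlinarith [Real.sqrt_nonneg 2]
  have h2b : Real.sqrt 2 ≤ 3 / 2 := by nlinarith [Real.sqrt_nonneg 2]
  rw [div_le_iff₀ hupos]
  rcases le_or_gt x (1 + S) with hc | hc
  · have hvs : v ≤ Real.sqrt 2 * u := by
      rw [hv, show Real.sqrt 2 * u = Real.sqrt (2 * (1 + S)) by
        rw [Real.sqrt_mul (by norm_num)]]
      exact Real.sqrt_le_sqrt (by linarith)
    have hmin : min S B ≤ min (S + x) B := min_le_min (by linarith) le_rfl
    nlinarith [mul_nonneg (sub_nonneg.2 hmin) hupos.le,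
      mul_nonneg (sub_nonneg.2 huv) hupos.le,
      mul_le_mul_of_nonneg_left hvs (sub_nonneg.2 huv)]
  · have hSB : S ≤ B := by linarith
    have hminS : min S B = S := min_eq_left hSB
    have hminx : x ≤ min (S + x) B := le_min (by linarith) hxB
    have hvs : Real.sqrt 2 * u ≤ v := by
      rw [hv, show Real.sqrt 2 * u = Real.sqrt (2 * (1 + S)) by
        rw [Real.sqrt_mul (by norm_num)]]
      exact Real.sqrt_le_sqrt (by linarith)
    rw [hminS]
    nlinarith [mul_le_mul_of_nonneg_right hvs hupos.le,
      mul_le_mul_of_nonneg_right hminx hupos.le,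
      mul_le_mul_of_nonneg_left hu1 (show (0:ℝ) ≤ x - S by linarith),
      hupos.le]

theorem stmt_0 (T : ℕ) (hT : 0 < T) (B : ℝ) (hB : 0 < B) (x : ℕ → ℝ)
    (hx : ∀ t ∈ Finset.Icc 1 T, 0 ≤ x t ∧ x t ≤ B) :
    ∑ t ∈ Finset.Icc 1 T, x t / Real.sqrt (1 + ∑ s ∈ Finset.Icc 1 (t - 1), x s)
      ≤ 4 * Real.sqrt (1 + (1 / 2) * ∑ t ∈ Finset.Icc 1 T, x t) + B := by
  set Q : ℕ → ℝ := fun n => ∑ j ∈ Finset.range n, x (1 + j) with hQdef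
  have hQ : ∀ n : ℕ, ∑ s ∈ Finset.Icc 1 n, x s = Q n := by
    intro n
    rw [← Finset.Ico_add_one_right_eq_Icc, Finset.sum_Ico_eq_sum_range]
    simp [hQdef]
  have hQnn : ∀ n, n ≤ T → 0 ≤ Q n := by
    intro n hn
    apply Finset.sum_nonneg
    intro j hj
    exact (hx (1 + j) (Finset.mem_Icc.mpr ⟨by omega, by
      simp only [Finset.mem_range] at hj; omega⟩)).1
  set φ : ℕ → ℝ := fun n => 2 * Real.sqrt 2 * Real.sqrt (1 + Q n) + min (Q n) B with hφdef
  have hstep : ∀ i ∈ Finset.range T,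
      x (1 + i) / Real.sqrt (1 + Q i) ≤ φ (i + 1) - φ i := by
    intro i hi
    have hi' := Finset.mem_range.mp hi
    have hxi := hx (1 + i) (Finset.mem_Icc.mpr ⟨by omega, by omega⟩)
    have hQs : Q (i + 1) = Q i + x (1 + i) := Finset.sum_range_succ _ _
    have hkey := key_step B (Q i) (x (1 + i)) hB (hQnn i (by omega)) hxi.1 hxi.2
    have hφd : φ (i + 1) - φ i =
        2 * Real.sqrt 2 * (Real.sqrt (1 + Q i + x (1 + i)) - Real.sqrt (1 + Q i))
          + (min (Q i + x (1 + i)) B - min (Q i) B) := by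
      simp only [hφdef, hQs]
      rw [show 1 + (Q i + x (1 + i)) = 1 + Q i + x (1 + i) by ring]
      ring
    rw [hφd]
    exact hkey
  have hsum : ∑ t ∈ Finset.Icc 1 T, x t / Real.sqrt (1 + ∑ s ∈ Finset.Icc 1 (t - 1), x s)
      = ∑ i ∈ Finset.range T, x (1 + i) / Real.sqrt (1 + Q i) := by
    rw [← Finset.Ico_add_one_right_eq_Icc, Finset.sum_Ico_eq_sum_range]
    refine Finset.sum_congr (by simp) (fun i _ => ?_)
    rw [show 1 + i - 1 = i by omega, hQ]
  rw [hsum, hQ]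
  have htel : ∑ i ∈ Finset.range T, (φ (i + 1) - φ i) = φ T - φ 0 :=
    Finset.sum_range_sub φ T
  have h1 : ∑ i ∈ Finset.range T, x (1 + i) / Real.sqrt (1 + Q i)
      ≤ φ T - φ 0 := htel ▸ Finset.sum_le_sum hstep
  have hQ0 : Q 0 = 0 := by simp [hQdef]
  have hφ0 : φ 0 = 2 * Real.sqrt 2 := by
    simp [hφdef, hQ0, min_eq_left hB.le]
  have hQT : 0 ≤ Q T := hQnn T le_rfl
  have hminT : min (Q T) B ≤ B := min_le_right _ _
  -- final comparison : 2√2 √(1+Q T) ≤ 4 √(1+Q T/2)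
  have hfin : 2 * Real.sqrt 2 * Real.sqrt (1 + Q T)
      ≤ 4 * Real.sqrt (1 + (1 / 2) * Q T) := by
    have ha : Real.sqrt 2 ^ 2 = 2 := Real.sq_sqrt (by norm_num)
    have hb : Real.sqrt (1 + Q T) ^ 2 = 1 + Q T := Real.sq_sqrt (by linarith)
    have hc : Real.sqrt (1 + (1 / 2) * Q T) ^ 2 = 1 + (1 / 2) * Q T :=
      Real.sq_sqrt (by linarith)
    have ha' : 0 ≤ Real.sqrt 2 := Real.sqrt_nonneg _
    have hb' : 0 ≤ Real.sqrt (1 + Q T) := Real.sqrt_nonneg _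
    have hc' : 0 ≤ Real.sqrt (1 + (1 / 2) * Q T) := Real.sqrt_nonneg _
    nlinarith [mul_nonneg (mul_nonneg (by norm_num : (0:ℝ) ≤ 2) ha') hb',
      sq_nonneg (2 * Real.sqrt 2 * Real.sqrt (1 + Q T)
        - 4 * Real.sqrt (1 + (1 / 2) * Q T)),
      sq_nonneg (2 * Real.sqrt 2 * Real.sqrt (1 + Q T)
        + 4 * Real.sqrt (1 + (1 / 2) * Q T))]
  have hφT : φ T = 2 * Real.sqrt 2 * Real.sqrt (1 + Q T) + min (Q T) B := rfl
  have hs2 : (0:ℝ) ≤ Real.sqrt 2 := Real.sqrt_nonneg 2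
  rw [hφT, hφ0] at h1
  linarith [h1, hminT, hfin, hs2]
end

section
/- Let $S_t \subseteq \mathbb{R}^d$ be a convex set, $z > 0$, $x$ a unit vector, and $\epsilon > 0$ with $2\epsilon \le z/2$ (i.e., the half-space shift satisfies $z + 2\epsilon \le \frac{3}{2}z$). Suppose $y \in \mathbb{R}$ is chosen so that $\mathrm{Vol}(\{v \in S_t + zB : \langle v, x\rangle \le y - \epsilon\}) = \frac{1}{2}\mathrm{Vol}(S_t + zB)$, and let $S_{t+1} = \{v \in S_t : \langle v, x\rangle \le y + \epsilon\}$. If additionally $\mathrm{Vol}(S_t + zB) \geq 4zC$ where $C$ is the maximal cross-sectional volume of $S_t + zB$ along $x$, then $\mathrm{Vol}(S_{t+1} + zB) \leq \frac{7}{8}\mathrm{Vol}(S_t + zB)$. -/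
open MeasureTheory
open scoped InnerProductSpace ENNReal Pointwise NNReal

open Set in
/-- Fubini-type bound: the volume of a slab of width `b - a` in direction `x` inside a
measurable set `A` is at most the width times the supremum of the Hausdorff measures of
the hyperplane sections. -/
lemma slab_vol_le_aux {m : ℕ} (A : Set (EuclideanSpace ℝ (Fin (m + 1)))) (hA : MeasurableSet A)
    (x : EuclideanSpace ℝ (Fin (m + 1))) (hx : ‖x‖ = 1) (a b : ℝ) :
    volume {v ∈ A | a < ⟪v, x⟫_ℝ ∧ ⟪v, x⟫_ℝ ≤ b}
      ≤ ENNReal.ofReal (b - a) * ⨆ c : ℝ, μH[(m : ℝ)] {v ∈ A | ⟪v, x⟫_ℝ = c} := by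
  classical
  -- an orthonormal basis whose 0-th vector is `x`
  have card : Module.finrank ℝ (EuclideanSpace ℝ (Fin (m + 1)))
      = Fintype.card (Fin (m + 1)) := by simp [finrank_euclideanSpace]
  have horth : Orthonormal ℝ
      (({0} : Set (Fin (m + 1))).restrict (fun _ => x)) := by
    refine ⟨fun i => hx, fun i j hij => ?_⟩
    exact absurd (Subtype.ext ((Set.mem_singleton_iff.mp i.2).trans
      (Set.mem_singleton_iff.mp j.2).symm)) hij
  obtain ⟨B, hB⟩ := horth.exists_orthonormalBasis_extension_of_card_eq card
  have hB0 : B 0 = x := hB 0 rfl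
  have hrep : ∀ v : EuclideanSpace ℝ (Fin (m + 1)), B.repr v 0 = ⟪v, x⟫_ℝ := fun v => by
    rw [B.repr_apply_apply, hB0, real_inner_comm]
  -- the measurable equivalence splitting off the 0-th coordinate
  let g : EuclideanSpace ℝ (Fin (m + 1)) ≃ᵐ ℝ × (Fin m → ℝ) :=
    (B.measurableEquiv.trans (MeasurableEquiv.toLp 2 (Fin (m + 1) → ℝ)).symm).trans
      (MeasurableEquiv.piFinSuccAbove (fun _ => ℝ) 0)
  have hgmp : MeasurePreserving g volume volume := by
    have h1 := B.measurePreserving_measurableEquiv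
    have h2 := EuclideanSpace.volume_preserving_symm_measurableEquiv_toLp (Fin (m + 1))
    have h3 := volume_preserving_piFinSuccAbove (fun _ : Fin (m + 1) => ℝ) 0
    exact h3.comp (h2.comp h1)
  let proj2 : EuclideanSpace ℝ (Fin (m + 1)) → (Fin m → ℝ) :=
    fun v j => B.repr v j.succ
  have hg : ∀ v, g v = (⟪v, x⟫_ℝ, proj2 v) := by
    intro v
    show (MeasurableEquiv.piFinSuccAbove (fun _ => ℝ) 0)
      ((MeasurableEquiv.toLp 2 (Fin (m + 1) → ℝ)).symm (B.measurableEquiv v)) = _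
    have : (MeasurableEquiv.toLp 2 (Fin (m + 1) → ℝ)).symm (B.measurableEquiv v)
        = (B.repr v : Fin (m + 1) → ℝ) := rfl
    rw [this]
    simp [MeasurableEquiv.piFinSuccAbove, Fin.tail, hrep, proj2]
    rfl
  -- `proj2` is 1-Lipschitz
  have hproj2 : LipschitzWith 1 proj2 := by
    have hrm : LipschitzWith 1
        (fun (w : Fin (m + 1) → ℝ) (j : Fin m) => w j.succ) := by
      refine LipschitzWith.of_edist_le fun w w' => ?_
      rw [edist_pi_def, edist_pi_def]
      exact Finset.sup_le fun j _ =>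
        Finset.le_sup (f := fun b : Fin (m + 1) => edist (w b) (w' b))
          (Finset.mem_univ (Fin.succ j))
    have h := (hrm.comp
        (PiLp.lipschitzWith_ofLp 2 (fun _ : Fin (m + 1) => ℝ))).comp
      B.repr.isometry.lipschitz
    simp only [mul_one] at h
    exact h
  -- slice bound
  have hHm : (μH[(m : ℝ)] : Measure (Fin m → ℝ)) = volume := by
    simpa using MeasureTheory.hausdorffMeasure_pi_real (ι := Fin m)
  have hslice : ∀ c : ℝ, volume (proj2 '' {v ∈ A | ⟪v, x⟫_ℝ = c})
      ≤ μH[(m : ℝ)] {v ∈ A | ⟪v, x⟫_ℝ = c} := by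
    intro c
    rw [← hHm]
    have := hproj2.hausdorffMeasure_image_le (d := (m : ℝ)) (Nat.cast_nonneg m)
      {v ∈ A | ⟪v, x⟫_ℝ = c}
    simpa using this
  -- the slab set is measurable
  have hcont : Continuous fun v : EuclideanSpace ℝ (Fin (m + 1)) => ⟪v, x⟫_ℝ :=
    continuous_id.inner continuous_const
  set S : Set (EuclideanSpace ℝ (Fin (m + 1))) :=
    {v ∈ A | a < ⟪v, x⟫_ℝ ∧ ⟪v, x⟫_ℝ ≤ b} with hS
  have hSm : MeasurableSet S := by
    have : S = A ∩ (fun v : EuclideanSpace ℝ (Fin (m + 1)) => ⟪v, x⟫_ℝ) ⁻¹' Set.Ioc a b := by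
      ext v
      simp only [hS, Set.mem_setOf_eq, Set.mem_inter_iff, Set.mem_preimage,
        Set.mem_Ioc]
    rw [this]
    exact hA.inter (hcont.measurable measurableSet_Ioc)
  have himg : volume (g '' S) = volume S := by
    rw [MeasurableEquiv.image_eq_preimage_symm]
    exact (hgmp.symm g).measure_preimage hSm.nullMeasurableSet
  have hTm : MeasurableSet (g '' S) := g.measurableSet_image.2 hSm
  set Csup : ℝ≥0∞ := ⨆ c : ℝ, μH[(m : ℝ)] {v ∈ A | ⟪v, x⟫_ℝ = c} with hCsup
  have key : ∀ t : ℝ, volume (Prod.mk t ⁻¹' (g '' S))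
      ≤ (Set.Ioc a b).indicator (fun _ => Csup) t := by
    intro t
    by_cases ht : t ∈ Set.Ioc a b
    · rw [Set.indicator_of_mem ht]
      refine le_trans (measure_mono ?_) ((hslice t).trans (le_iSup
        (fun c => μH[(m : ℝ)] {v ∈ A | ⟪v, x⟫_ℝ = c}) t))
      rintro w hw
      obtain ⟨v, hv, hgv⟩ := hw
      rw [hg v] at hgv
      obtain ⟨h1, h2⟩ := Prod.mk.injEq .. ▸ hgv
      exact ⟨v, ⟨hv.1, by rw [← h1]⟩, h2⟩
    · rw [Set.indicator_of_notMem ht]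
      have : Prod.mk t ⁻¹' (g '' S) = ∅ := by
        ext w
        simp only [Set.mem_preimage, Set.mem_empty_iff_false, iff_false]
        rintro ⟨v, hv, hgv⟩
        rw [hg v] at hgv
        obtain ⟨h1, -⟩ := Prod.mk.injEq .. ▸ hgv
        exact ht (h1 ▸ Set.mem_Ioc.2 ⟨hv.2.1, hv.2.2⟩)
      simp [this]
  calc volume S = volume (g '' S) := himg.symm
    _ = ∫⁻ t : ℝ, volume (Prod.mk t ⁻¹' (g '' S)) := by
        rw [Measure.volume_eq_prod, Measure.prod_apply hTm]
    _ ≤ ∫⁻ t : ℝ, (Set.Ioc a b).indicator (fun _ => Csup) t := lintegral_mono key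
    _ = Csup * volume (Set.Ioc a b) := by
        rw [lintegral_indicator measurableSet_Ioc, setLIntegral_const]
    _ = ENNReal.ofReal (b - a) * Csup := by rw [Real.volume_Ioc, mul_comm]

theorem stmt_7 (d : ℕ) (St : Set (EuclideanSpace ℝ (Fin d))) (hconv : Convex ℝ St)
    (z ε y : ℝ) (hz : 0 < z) (hε : 0 < ε) (hεz : 2 * ε ≤ z / 2)
    (x : EuclideanSpace ℝ (Fin d)) (hx : ‖x‖ = 1)
    (C : ℝ≥0∞)
    (hC : C = ⨆ c : ℝ, μH[(d : ℝ) - 1]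
      {v ∈ St + z • Metric.closedBall (0 : EuclideanSpace ℝ (Fin d)) 1 | ⟪v, x⟫_ℝ = c})
    (hhalf : volume {v ∈ St + z • Metric.closedBall (0 : EuclideanSpace ℝ (Fin d)) 1 |
        ⟪v, x⟫_ℝ ≤ y - ε}
      = volume (St + z • Metric.closedBall (0 : EuclideanSpace ℝ (Fin d)) 1) / 2)
    (hvol : ENNReal.ofReal (4 * z) * C
      ≤ volume (St + z • Metric.closedBall (0 : EuclideanSpace ℝ (Fin d)) 1)) :
    volume ({v ∈ St | ⟪v, x⟫_ℝ ≤ y + ε}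
        + z • Metric.closedBall (0 : EuclideanSpace ℝ (Fin d)) 1)
      ≤ (7 / 8 : ℝ≥0∞) *
        volume (St + z • Metric.closedBall (0 : EuclideanSpace ℝ (Fin d)) 1) := by
  induction d with
  | zero =>
      exfalso
      have hx0 : x = 0 := PiLp.ext fun i => Fin.elim0 i
      rw [hx0, norm_zero] at hx
      exact zero_ne_one hx
  | succ m _ =>
  set Bz : Set (EuclideanSpace ℝ (Fin (m + 1))) := z • Metric.closedBall 0 1 with hBzdef
  set K : Set (EuclideanSpace ℝ (Fin (m + 1))) := St + Bz with hKdef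
  have hKconv : Convex ℝ K := hconv.add ((convex_closedBall _ _).smul z)
  have hBzn : ∀ s ∈ Bz, ‖s‖ ≤ z := by
    rintro s ⟨c, hc, rfl⟩
    rw [norm_smul]
    have hc1 : ‖c‖ ≤ 1 := mem_closedBall_zero_iff.mp hc
    calc |z| * ‖c‖ ≤ |z| * 1 := by
          exact mul_le_mul_of_nonneg_left hc1 (abs_nonneg z)
      _ = z := by rw [mul_one, abs_of_pos hz]
  -- main inclusion
  have hmain : {v ∈ St | ⟪v, x⟫_ℝ ≤ y + ε} + Bz ⊆ {v ∈ K | ⟪v, x⟫_ℝ ≤ y + ε + z} := by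
    rintro w ⟨u, hu, s, hs, rfl⟩
    refine ⟨⟨u, hu.1, s, hs, rfl⟩, ?_⟩
    have h1 : ⟪u + s, x⟫_ℝ = ⟪u, x⟫_ℝ + ⟪s, x⟫_ℝ := inner_add_left u s x
    have h2 : ⟪s, x⟫_ℝ ≤ z := by
      calc ⟪s, x⟫_ℝ ≤ ‖s‖ * ‖x‖ := real_inner_le_norm s x
        _ = ‖s‖ := by rw [hx, mul_one]
        _ ≤ z := hBzn s hs
    have h3 := hu.2
    rw [h1]; linarith
  have hsplit : {v ∈ K | ⟪v, x⟫_ℝ ≤ y + ε + z} ⊆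
      {v ∈ K | ⟪v, x⟫_ℝ ≤ y - ε} ∪
        {v ∈ K | y - ε < ⟪v, x⟫_ℝ ∧ ⟪v, x⟫_ℝ ≤ y + ε + z} := by
    rintro v ⟨hv, hvb⟩
    rcases le_or_gt ⟪v, x⟫_ℝ (y - ε) with h | h
    · exact Or.inl ⟨hv, h⟩
    · exact Or.inr ⟨hv, h, hvb⟩
  -- slab bound through the interior
  have hfr : volume (frontier K) = 0 := hKconv.addHaar_frontier volume
  have hsub2 : {v ∈ K | y - ε < ⟪v, x⟫_ℝ ∧ ⟪v, x⟫_ℝ ≤ y + ε + z} ⊆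
      {v ∈ interior K | y - ε < ⟪v, x⟫_ℝ ∧ ⟪v, x⟫_ℝ ≤ y + ε + z} ∪ frontier K := by
    rintro v ⟨hv, hvc⟩
    have hcl : v ∈ interior K ∪ frontier K := by
      rw [← closure_eq_interior_union_frontier]
      exact subset_closure hv
    rcases hcl with h | h
    · exact Or.inl ⟨h, hvc⟩
    · exact Or.inr h
  have hslab := slab_vol_le_aux (interior K) isOpen_interior.measurableSet x hx
    (y - ε) (y + ε + z)
  have hcast : ((m + 1 : ℕ) : ℝ) - 1 = (m : ℝ) := by push_cast; ring
  have hCle : (⨆ c : ℝ, μH[(m : ℝ)] {v ∈ interior K | ⟪v, x⟫_ℝ = c}) ≤ C := by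
    rw [hC, ← hcast]
    exact iSup_mono fun c => measure_mono fun v hv => ⟨interior_subset hv.1, hv.2⟩
  have hslab2 : volume {v ∈ K | y - ε < ⟪v, x⟫_ℝ ∧ ⟪v, x⟫_ℝ ≤ y + ε + z}
      ≤ ENNReal.ofReal (y + ε + z - (y - ε)) * C := by
    refine le_trans (measure_mono hsub2) ?_
    refine le_trans (measure_union_le _ _) ?_
    rw [hfr, add_zero]
    exact hslab.trans (mul_le_mul_right hCle _)
  have hwidth : ENNReal.ofReal (y + ε + z - (y - ε)) ≤ ENNReal.ofReal (3 / 8 * (4 * z)) :=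
    ENNReal.ofReal_le_ofReal (by linarith)
  have h38 : ENNReal.ofReal (3 / 8 * (4 * z)) * C ≤ (3 / 8 : ℝ≥0∞) * volume K := by
    rw [ENNReal.ofReal_mul (by norm_num), mul_assoc]
    have hof : ENNReal.ofReal ((3 : ℝ) / 8) = (3 / 8 : ℝ≥0∞) := by
      rw [ENNReal.ofReal_div_of_pos (by norm_num)]; norm_num
    rw [hof]
    exact mul_le_mul_right hvol _
  have hslab3 : volume {v ∈ K | y - ε < ⟪v, x⟫_ℝ ∧ ⟪v, x⟫_ℝ ≤ y + ε + z}
      ≤ (3 / 8 : ℝ≥0∞) * volume K :=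
    hslab2.trans ((mul_le_mul_left hwidth C).trans h38)
  calc volume ({v ∈ St | ⟪v, x⟫_ℝ ≤ y + ε} + Bz)
      ≤ volume ({v ∈ K | ⟪v, x⟫_ℝ ≤ y - ε} ∪
          {v ∈ K | y - ε < ⟪v, x⟫_ℝ ∧ ⟪v, x⟫_ℝ ≤ y + ε + z}) :=
        measure_mono (hmain.trans hsplit)
    _ ≤ volume {v ∈ K | ⟪v, x⟫_ℝ ≤ y - ε} +
          volume {v ∈ K | y - ε < ⟪v, x⟫_ℝ ∧ ⟪v, x⟫_ℝ ≤ y + ε + z} :=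
        measure_union_le _ _
    _ ≤ volume K / 2 + (3 / 8 : ℝ≥0∞) * volume K := by
        rw [hhalf]; exact add_le_add_right hslab3 _
    _ = (2⁻¹ + 3 / 8 : ℝ≥0∞) * volume K := by
        rw [add_mul, ENNReal.div_eq_inv_mul]
    _ = (7 / 8 : ℝ≥0∞) * volume K := by
        congr 1
        have h3 : (3 / 8 : ℝ≥0∞) = ((3 / 8 : ℝ≥0) : ℝ≥0∞) := by
          rw [ENNReal.coe_div (by norm_num)]; norm_num
        have h7 : (7 / 8 : ℝ≥0∞) = ((7 / 8 : ℝ≥0) : ℝ≥0∞) := by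
          rw [ENNReal.coe_div (by norm_num)]; norm_num
        have h2 : (2⁻¹ : ℝ≥0∞) = ((2⁻¹ : ℝ≥0) : ℝ≥0∞) := by simp
        rw [h2, h3, h7, ← ENNReal.coe_add, ENNReal.coe_inj, ← NNReal.coe_inj]
        push_cast
        norm_num
end
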